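/- Let q be a prime power, r, m, n positive integers with m, n ≤ r, F_{q^r} the field with q^r elements, and ψ a nontrivial additive character of F_{q^r}. Let M ⊆ F_{q^r} and N ⊆ F_{q^r} \ {0} be subsets of nonzero elements, and α : M → ℂ, β : N → ℂ weights bounded by A and B respectively. Then |Σ_{f ∈ M} Σ_{g ∈ N} α_f β_g ψ(f⁻¹ g⁻¹)|⁴ ≤ A⁴ B⁴ (#M)² (#N)² · |Σ_{u ∈ F_{q^r}} Σ_{v ∈ F_{q^r}} I_M(u)·I_N(v)·ψ(uv)|, where I_M(u) = #{(f₁, f₂) ∈ M² : f₁⁻¹ - f₂⁻¹ = u} and I_N(v) = #{(g₁, g₂) ∈ N² : g₁⁻¹ - g₂⁻¹ = v}. -/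

import Mathlib

open scoped Classical

open Finset

set_option maxHeartbeats 1000000 in
/-- For `K = F_{q^r}`, a nontrivial additive character `ψ`, sets
`M, N` of nonzero elements and weights `α, β` bounded by `A, B`:
`|Σ_{f ∈ M} Σ_{g ∈ N} α_f β_g ψ(f⁻¹g⁻¹)|⁴
  ≤ A⁴B⁴(#M)²(#N)²·|Σ_u Σ_v I_M(u)·I_N(v)·ψ(uv)|`,
where `I_M(u) = #{(f₁,f₂) ∈ M² : f₁⁻¹ - f₂⁻¹ = u}` and similarly for `I_N`. -/
theorem stmt_17 (q r m n p k : ℕ) (hp : p.Prime) (hk : 0 < k) (hq : q = p ^ k)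
    (hm : 0 < m) (hmr : m ≤ r) (hn : 0 < n) (hnr : n ≤ r)
    (K : Type*) [Field K] [Fintype K] (hK : Fintype.card K = q ^ r)
    (ψ : AddChar K ℂ) (hψ : ψ ≠ 1) (M N : Finset K)
    (hM : ∀ f ∈ M, f ≠ 0) (hN : ∀ g ∈ N, g ≠ 0)
    (α β : K → ℂ) (A B : ℝ)
    (hα : ∀ f ∈ M, ‖α f‖ ≤ A) (hβ : ∀ g ∈ N, ‖β g‖ ≤ B) :
    ‖∑ f ∈ M, ∑ g ∈ N, α f * β g * ψ (f⁻¹ * g⁻¹)‖ ^ 4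
      ≤ A ^ 4 * B ^ 4 * (M.card : ℝ) ^ 2 * (N.card : ℝ) ^ 2 *
          ‖∑ u : K, ∑ v : K,
            ((((M ×ˢ M).filter fun t => t.1⁻¹ - t.2⁻¹ = u).card : ℂ)) *
            ((((N ×ˢ N).filter fun t => t.1⁻¹ - t.2⁻¹ = v).card : ℂ)) *
            ψ (u * v)‖ := by
  classical
  set conj := (starRingEnd ℂ)
  -- inner sums
  set T : K → ℂ := fun f => ∑ g ∈ N, β g * ψ (f⁻¹ * g⁻¹) with hT
  set U : K → ℂ := fun v => ∑ f ∈ M, ψ (f⁻¹ * v) with hU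
  set IM : K → ℕ := fun u => ((M ×ˢ M).filter fun t => t.1⁻¹ - t.2⁻¹ = u).card with hIM
  set IN : K → ℕ := fun v => ((N ×ˢ N).filter fun t => t.1⁻¹ - t.2⁻¹ = v).card with hIN
  have hconj : ∀ x : K, conj (ψ x) = ψ (-x) := fun x => (AddChar.map_neg_eq_conj ψ x).symm
  -- |U v|^2 as a character sum
  have hUsq : ∀ v : K, U v * conj (U v) = ∑ u : K, (IM u : ℂ) * ψ (u * v) := by
    intro v
    have : U v * conj (U v)
        = ∑ t ∈ M ×ˢ M, ψ ((t.1⁻¹ - t.2⁻¹) * v) := by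
      rw [hU, map_sum, Finset.sum_mul_sum, Finset.sum_product]
      refine Finset.sum_congr rfl fun f1 _ => Finset.sum_congr rfl fun f2 _ => ?_
      rw [hconj, ← AddChar.map_add_eq_mul]
      ring_nf
    rw [this, ← Finset.sum_fiberwise (M ×ˢ M) (fun t => t.1⁻¹ - t.2⁻¹)
        (fun t => ψ ((t.1⁻¹ - t.2⁻¹) * v))]
    refine Finset.sum_congr rfl fun u _ => ?_
    rw [Finset.sum_congr rfl (fun t ht => by
      rw [(Finset.mem_filter.mp ht).2]), Finset.sum_const, nsmul_eq_mul]
  -- expansion of ∑_f |T f|^2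
  have hexp : ∑ f ∈ M, T f * conj (T f)
      = ∑ t ∈ N ×ˢ N, β t.1 * conj (β t.2) * U (t.1⁻¹ - t.2⁻¹) := by
    have h1 : ∀ f : K, T f * conj (T f)
        = ∑ t ∈ N ×ˢ N, β t.1 * conj (β t.2) * ψ (f⁻¹ * (t.1⁻¹ - t.2⁻¹)) := by
      intro f
      rw [hT, map_sum, Finset.sum_mul_sum, Finset.sum_product]
      refine Finset.sum_congr rfl fun g1 _ => Finset.sum_congr rfl fun g2 _ => ?_
      rw [RingHom.map_mul, hconj,
        show f⁻¹ * ((g1, g2).1⁻¹ - (g1, g2).2⁻¹) = f⁻¹ * g1⁻¹ + -(f⁻¹ * g2⁻¹) by ring,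
        AddChar.map_add_eq_mul]
      ring
    simp_rw [h1]
    rw [Finset.sum_comm]
    refine Finset.sum_congr rfl fun t _ => ?_
    rw [hU, Finset.mul_sum]
  -- real quantities
  set S := ∑ f ∈ M, ∑ g ∈ N, α f * β g * ψ (f⁻¹ * g⁻¹) with hS
  set R : ℝ := ∑ f ∈ M, ‖T f‖ ^ 2 with hR
  set W : ℝ := ∑ v : K, (IN v : ℝ) * ‖U v‖ with hW
  set D : ℝ := ∑ v : K, (IN v : ℝ) * ‖U v‖ ^ 2 with hD
  set E : ℂ := ∑ u : K, ∑ v : K, (IM u : ℂ) * (IN v : ℂ) * ψ (u * v) with hE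
  have hR0 : (0:ℝ) ≤ R := Finset.sum_nonneg fun _ _ => sq_nonneg _
  have hD0 : (0:ℝ) ≤ D := Finset.sum_nonneg fun v _ =>
    mul_nonneg (Nat.cast_nonneg _) (sq_nonneg _)
  -- Step 1 : |S|^2 ≤ A^2 * #M * R
  have hST : S = ∑ f ∈ M, α f * T f := by
    rw [hS]
    refine Finset.sum_congr rfl fun f _ => ?_
    rw [hT, Finset.mul_sum]
    exact Finset.sum_congr rfl fun g _ => by ring
  have h2 : ‖S‖ ≤ ∑ f ∈ M, ‖α f‖ * ‖T f‖ := by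
    rw [hST]
    refine (norm_sum_le _ _).trans_eq ?_
    exact Finset.sum_congr rfl fun f _ => norm_mul _ _
  have h3 : (∑ f ∈ M, ‖α f‖ * ‖T f‖) ^ 2
      ≤ (∑ f ∈ M, ‖α f‖ ^ 2) * R :=
    Finset.sum_mul_sq_le_sq_mul_sq M _ _
  have h4 : ∑ f ∈ M, ‖α f‖ ^ 2 ≤ (M.card : ℝ) * A ^ 2 := by
    calc ∑ f ∈ M, ‖α f‖ ^ 2 ≤ ∑ _f ∈ M, A ^ 2 :=
          Finset.sum_le_sum fun f hf =>
            pow_le_pow_left₀ (norm_nonneg _) (hα f hf) 2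
      _ = (M.card : ℝ) * A ^ 2 := by rw [Finset.sum_const, nsmul_eq_mul]
  have hS2 : ‖S‖ ^ 2 ≤ A ^ 2 * (M.card : ℝ) * R := by
    calc ‖S‖ ^ 2 ≤ (∑ f ∈ M, ‖α f‖ * ‖T f‖) ^ 2 :=
          pow_le_pow_left₀ (norm_nonneg _) h2 2
      _ ≤ (∑ f ∈ M, ‖α f‖ ^ 2) * R := h3
      _ ≤ ((M.card : ℝ) * A ^ 2) * R := mul_le_mul_of_nonneg_right h4 hR0
      _ = A ^ 2 * (M.card : ℝ) * R := by ring
  -- Step 2 : R ≤ B^2 * W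
  have hRC : ((R : ℝ) : ℂ) = ∑ f ∈ M, T f * conj (T f) := by
    rw [hR]
    push_cast
    refine Finset.sum_congr rfl fun f _ => ?_
    rw [Complex.mul_conj, Complex.normSq_eq_norm_sq]
    push_cast
    ring
  have hRabs : R = ‖∑ f ∈ M, T f * conj (T f)‖ := by
    rw [← hRC, Complex.norm_real, Real.norm_eq_abs, abs_of_nonneg hR0]
  have hWeq : ∑ t ∈ N ×ˢ N, ‖U (t.1⁻¹ - t.2⁻¹)‖ = W := by
    rw [hW, ← Finset.sum_fiberwise (N ×ˢ N) (fun t => t.1⁻¹ - t.2⁻¹)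
        (fun t => ‖U (t.1⁻¹ - t.2⁻¹)‖)]
    refine Finset.sum_congr rfl fun v _ => ?_
    rw [Finset.sum_congr rfl (fun t ht => by rw [(Finset.mem_filter.mp ht).2]),
      Finset.sum_const, nsmul_eq_mul]
  have hRW : R ≤ B ^ 2 * W := by
    rw [hRabs, hexp]
    calc ‖∑ t ∈ N ×ˢ N, β t.1 * conj (β t.2) * U (t.1⁻¹ - t.2⁻¹)‖
        ≤ ∑ t ∈ N ×ˢ N, ‖β t.1 * conj (β t.2) * U (t.1⁻¹ - t.2⁻¹)‖ :=
          norm_sum_le _ _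
      _ ≤ ∑ t ∈ N ×ˢ N, B ^ 2 * ‖U (t.1⁻¹ - t.2⁻¹)‖ := by
          refine Finset.sum_le_sum fun t ht => ?_
          obtain ⟨ht1, ht2⟩ := Finset.mem_product.mp ht
          have hb1 := hβ t.1 ht1
          have hb2 := hβ t.2 ht2
          have hb0 : (0:ℝ) ≤ B := (norm_nonneg _).trans hb1
          rw [norm_mul, norm_mul, Complex.norm_conj]
          have : ‖β t.1‖ * ‖β t.2‖ ≤ B ^ 2 := by
            calc ‖β t.1‖ * ‖β t.2‖ ≤ B * B :=
                  mul_le_mul hb1 hb2 (norm_nonneg _) hb0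
              _ = B ^ 2 := by ring
          exact mul_le_mul_of_nonneg_right this (norm_nonneg _)
      _ = B ^ 2 * ∑ t ∈ N ×ˢ N, ‖U (t.1⁻¹ - t.2⁻¹)‖ := by
          rw [Finset.mul_sum]
      _ = B ^ 2 * W := by rw [hWeq]
  -- Step 3 : W^2 ≤ #N^2 * D
  have hINsum : ∑ v : K, (IN v : ℝ) = (N.card : ℝ) ^ 2 := by
    have h := Finset.card_eq_sum_card_fiberwise
      (f := fun t : K × K => t.1⁻¹ - t.2⁻¹) (s := N ×ˢ N) (t := (Finset.univ : Finset K))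
      (fun _ _ => Finset.mem_univ _)
    rw [Finset.card_product] at h
    have : ((N.card * N.card : ℕ) : ℝ) = ∑ v : K, (IN v : ℝ) := by
      rw [h]; push_cast; rfl
    rw [← this]; push_cast; ring
  have hW2 : W ^ 2 ≤ (N.card : ℝ) ^ 2 * D := by
    have hcs := Finset.sum_mul_sq_le_sq_mul_sq Finset.univ
      (fun v : K => Real.sqrt (IN v)) (fun v : K => Real.sqrt (IN v) * ‖U v‖)
    have e1 : ∀ v : K, Real.sqrt (IN v) * (Real.sqrt (IN v) * ‖U v‖)
        = (IN v : ℝ) * ‖U v‖ := by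
      intro v
      rw [← mul_assoc, Real.mul_self_sqrt (Nat.cast_nonneg _)]
    have e2 : ∀ v : K, Real.sqrt (IN v) ^ 2 = (IN v : ℝ) := fun v =>
      Real.sq_sqrt (Nat.cast_nonneg _)
    have e3 : ∀ v : K, (Real.sqrt (IN v) * ‖U v‖) ^ 2
        = (IN v : ℝ) * ‖U v‖ ^ 2 := by
      intro v
      rw [mul_pow, e2]
    simp_rw [e1, e2, e3] at hcs
    calc W ^ 2 = (∑ v : K, (IN v : ℝ) * ‖U v‖) ^ 2 := by rw [hW]
      _ ≤ (∑ v : K, (IN v : ℝ)) * ∑ v : K, (IN v : ℝ) * ‖U v‖ ^ 2 := hcs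
      _ = (N.card : ℝ) ^ 2 * D := by rw [hINsum, hD]
  -- Step 4 : ‖E‖ = D
  have hE2 : E = ((D : ℝ) : ℂ) := by
    rw [hE, Finset.sum_comm, hD]
    push_cast
    refine Finset.sum_congr rfl fun v _ => ?_
    have : ∑ u : K, (IM u : ℂ) * (IN v : ℂ) * ψ (u * v)
        = (IN v : ℂ) * ∑ u : K, (IM u : ℂ) * ψ (u * v) := by
      rw [Finset.mul_sum]
      exact Finset.sum_congr rfl fun u _ => by ring
    rw [this, ← hUsq v, Complex.mul_conj, Complex.normSq_eq_norm_sq]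
    push_cast
    ring
  have hDabs : ‖E‖ = D := by
    rw [hE2, Complex.norm_real, Real.norm_eq_abs, abs_of_nonneg hD0]
  -- Combine
  have hM2 : (0:ℝ) ≤ (M.card : ℝ) ^ 2 := sq_nonneg _
  calc ‖S‖ ^ 4 = (‖S‖ ^ 2) ^ 2 := by ring
    _ ≤ (A ^ 2 * (M.card : ℝ) * R) ^ 2 := pow_le_pow_left₀ (sq_nonneg _) hS2 2
    _ = A ^ 4 * (M.card : ℝ) ^ 2 * R ^ 2 := by ring
    _ ≤ A ^ 4 * (M.card : ℝ) ^ 2 * (B ^ 2 * W) ^ 2 :=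
        mul_le_mul_of_nonneg_left (pow_le_pow_left₀ hR0 hRW 2) (by positivity)
    _ = A ^ 4 * B ^ 4 * (M.card : ℝ) ^ 2 * W ^ 2 := by ring
    _ ≤ A ^ 4 * B ^ 4 * (M.card : ℝ) ^ 2 * ((N.card : ℝ) ^ 2 * D) :=
        mul_le_mul_of_nonneg_left hW2 (by positivity)
    _ = A ^ 4 * B ^ 4 * (M.card : ℝ) ^ 2 * (N.card : ℝ) ^ 2 * ‖E‖ := by
        rw [hDabs]; ring
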